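/- arXiv:2206.00094 — 2 statements merged into one kernel-verified Lean document; each statement's English description precedes it below -/
import Mathlib

section
/- Let n ≥ 1 and let A ∈ ℝ^{n×n} be the adjacency matrix of a weight-balanced weighted digraph, i.e., ∑_{j=1}^n A_{ij} = ∑_{j=1}^n A_{ji} for every i. Let L be the Laplacian matrix of A, and assume the kernel of L is one-dimensional (the eigenvalue 0 of L has geometric multiplicity 1). Then every L-invariant anti-synchrony subspace Δ_𝒫 ⊆ ℝ^n is evenly tagged. -/
/-- A tagged partition of `{1,…,n}` (modeled as `Fin n`): a partition into nonempty
classes together with a partial involution on the classes having at most one fixed point.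
The partial involution is encoded by `star`, with `star P = none` meaning `*` is
undefined at `P` (in particular `star P = none` for any `P` that is not a class). -/
structure TaggedPartition (n : ℕ) where
  classes : Set (Set (Fin n))
  classes_nonempty : ∀ P ∈ classes, P.Nonempty
  cover : ∀ i : Fin n, ∃ P ∈ classes, i ∈ P
  eq_of_inter : ∀ P ∈ classes, ∀ Q ∈ classes, (P ∩ Q).Nonempty → P = Q
  star : Set (Fin n) → Option (Set (Fin n))
  star_dom : ∀ P, star P ≠ none → P ∈ classes
  star_ran : ∀ P Q, star P = some Q → Q ∈ classes
  star_invol : ∀ P Q, star P = some Q → star Q = some P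
  star_fixed : ∀ P Q, star P = some P → star Q = some Q → P = Q

/-- The polydiagonal subspace `Δ_tp ⊆ ℝⁿ` of a tagged partition:
`x_i = x_j` whenever `[i] = [j]`, and `x_i = -x_j` whenever `[i]* = [j]`. -/
def TaggedPartition.polydiag {n : ℕ} (tp : TaggedPartition n) : Set (Fin n → ℝ) :=
  {x | (∀ P ∈ tp.classes, ∀ i ∈ P, ∀ j ∈ P, x i = x j) ∧
       (∀ P Q, tp.star P = some Q → ∀ i ∈ P, ∀ j ∈ Q, x i = - x j)}

/-- `Δ_tp` is a synchrony subspace: the partial involution is the empty function. -/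
def TaggedPartition.IsSynchrony {n : ℕ} (tp : TaggedPartition n) : Prop :=
  ∀ P, tp.star P = none

/-- Fully tagged: the partial involution is defined on every class. -/
def TaggedPartition.FullyTagged {n : ℕ} (tp : TaggedPartition n) : Prop :=
  ∀ P ∈ tp.classes, tp.star P ≠ none

/-- Evenly tagged: fully tagged and `#P = #P*` for every class `P`. -/
def TaggedPartition.EvenlyTagged {n : ℕ} (tp : TaggedPartition n) : Prop :=
  tp.FullyTagged ∧ ∀ P Q, tp.star P = some Q → P.ncard = Q.ncard

/-- The Laplacian matrix of a weighted adjacency matrix `A`: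
`L_{ij} = (∑_k A_{ik}) δ_{ij} − A_{ij}`. -/
def lap {n : ℕ} (A : Matrix (Fin n) (Fin n) ℝ) : Matrix (Fin n) (Fin n) ℝ :=
  Matrix.of fun i j => (if i = j then ∑ k, A i k else 0) - A i j

/-- Auxiliary: the polydiagonal as a submodule of `ℝⁿ`. -/
def polySub {n : ℕ} (tp : TaggedPartition n) : Submodule ℝ (Fin n → ℝ) where
  carrier := tp.polydiag
  add_mem' := by
    rintro x y ⟨hx1, hx2⟩ ⟨hy1, hy2⟩
    refine ⟨fun P hP i hi j hj => ?_, fun P Q hPQ i hi j hj => ?_⟩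
    · simp only [Pi.add_apply, hx1 P hP i hi j hj, hy1 P hP i hi j hj]
    · simp only [Pi.add_apply, hx2 P Q hPQ i hi j hj, hy2 P Q hPQ i hi j hj]; ring
  zero_mem' := ⟨fun _ _ _ _ _ _ => rfl, fun _ _ _ _ _ _ _ => by simp⟩
  smul_mem' := by
    rintro c x ⟨hx1, hx2⟩
    refine ⟨fun P hP i hi j hj => ?_, fun P Q hPQ i hi j hj => ?_⟩
    · simp only [Pi.smul_apply, hx1 P hP i hi j hj]
    · simp only [Pi.smul_apply, hx2 P Q hPQ i hi j hj, smul_neg]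

/-- Theorem 6.7. Let `A` be the adjacency matrix of a weight-balanced
weighted digraph (row sums equal column sums, vertex by vertex), let `L` be its
Laplacian, and assume the kernel of `L` is one-dimensional. Then every `L`-invariant
anti-synchrony subspace is evenly tagged. -/
theorem weightBalanced_antiSynchrony_evenlyTagged {n : ℕ} (hn : 1 ≤ n)
    (A : Matrix (Fin n) (Fin n) ℝ)
    (hbal : ∀ i, ∑ j, A i j = ∑ j, A j i)
    (hker : Module.finrank ℝ (LinearMap.ker (lap A).mulVecLin) = 1)
    (tp : TaggedPartition n)
    (hinv : ∀ x ∈ tp.polydiag, (lap A).mulVec x ∈ tp.polydiag)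
    (hanti : ¬ tp.IsSynchrony) :
    tp.EvenlyTagged := by
  classical
  -- column sums of the Laplacian vanish (weight balance)
  have hcol : ∀ j, ∑ i, lap A i j = 0 := by
    intro j
    simp only [lap, Matrix.of_apply]
    rw [Finset.sum_sub_distrib, Finset.sum_ite_eq' Finset.univ j]
    simp [hbal j]
  -- the all-ones vector is in the kernel
  have hone : (fun _ => (1:ℝ)) ∈ LinearMap.ker (lap A).mulVecLin := by
    rw [LinearMap.mem_ker]
    funext i
    simp only [Matrix.mulVecLin_apply, Matrix.mulVec, dotProduct, lap,
      Matrix.of_apply, mul_one, Pi.zero_apply]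
    rw [Finset.sum_sub_distrib, Finset.sum_ite_eq Finset.univ i]
    simp
  have hne1 : (fun _ => (1:ℝ)) ≠ (0 : Fin n → ℝ) := by
    intro h
    have := congrFun h ⟨0, hn⟩
    norm_num at this
  -- the kernel is exactly the span of the all-ones vector
  have hker_eq : LinearMap.ker (lap A).mulVecLin
      = Submodule.span ℝ {fun _ => (1:ℝ)} := by
    have hle : Submodule.span ℝ {fun _ => (1:ℝ)} ≤ LinearMap.ker (lap A).mulVecLin :=
      Submodule.span_le.mpr (by simpa using hone)
    refine (Submodule.eq_of_le_of_finrank_le hle ?_).symm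
    rw [hker, finrank_span_singleton hne1]
  -- the all-ones vector is not in the polydiagonal
  have hone_not : (fun _ => (1:ℝ)) ∉ tp.polydiag := by
    rintro ⟨-, h2⟩
    rw [TaggedPartition.IsSynchrony] at hanti
    push_neg at hanti
    obtain ⟨P, hP⟩ := hanti
    obtain ⟨Q, hPQ⟩ := Option.ne_none_iff_exists'.mp hP
    obtain ⟨i, hi⟩ := tp.classes_nonempty P (tp.star_dom P hP)
    obtain ⟨j, hj⟩ := tp.classes_nonempty Q (tp.star_ran P Q hPQ)
    have := h2 P Q hPQ i hi j hj
    norm_num at this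
  -- the restriction of L to the polydiagonal
  have hrest : ∀ x ∈ polySub tp, (lap A).mulVecLin x ∈ polySub tp := by
    intro x hx; exact hinv x hx
  set f : polySub tp →ₗ[ℝ] polySub tp := ((lap A).mulVecLin).restrict hrest with hf
  have hinj : Function.Injective f := by
    rw [← LinearMap.ker_eq_bot, Submodule.eq_bot_iff]
    rintro ⟨x, hx⟩ hx0
    have hxk : x ∈ LinearMap.ker (lap A).mulVecLin := by
      rw [LinearMap.mem_ker]
      exact congrArg Subtype.val hx0
    rw [hker_eq, Submodule.mem_span_singleton] at hxk
    obtain ⟨c, hc⟩ := hxk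
    have hc0 : c = 0 := by
      by_contra hc0
      apply hone_not
      have : (fun _ => (1:ℝ)) = c⁻¹ • x := by
        rw [← hc, smul_smul, inv_mul_cancel₀ hc0, one_smul]
      rw [this]
      exact (polySub tp).smul_mem c⁻¹ hx
    have : x = 0 := by rw [← hc, hc0, zero_smul]
    exact Subtype.ext this
  have hsurj : Function.Surjective f := (LinearMap.injective_iff_surjective).mp hinj
  -- every element of the polydiagonal has zero coordinate sum
  have hsum : ∀ x ∈ tp.polydiag, ∑ i, x i = 0 := by
    intro x hx
    obtain ⟨⟨y, hy⟩, hfy⟩ := hsurj ⟨x, hx⟩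
    have hxy : (lap A).mulVec y = x := congrArg Subtype.val hfy
    rw [← hxy]
    simp only [Matrix.mulVec, dotProduct]
    rw [Finset.sum_comm]
    rw [Finset.sum_congr rfl (fun j _ => (Finset.sum_mul ..).symm)]
    simp [hcol]
  -- ncard as a coordinate sum
  have hcard : ∀ S : Set (Fin n), ((S.ncard : ℝ)) = ∑ i, (if i ∈ S then (1:ℝ) else 0) := by
    intro S
    rw [Finset.sum_boole]
    congr 1
    rw [← Nat.card_coe_set_eq, Nat.card_eq_fintype_card, Fintype.card_subtype]
  -- membership in a class determines the class
  have hmem : ∀ R ∈ tp.classes, ∀ i ∈ R, ∀ S ∈ tp.classes, (i ∈ S ↔ R = S) := by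
    intro R hR i hi S hS
    exact ⟨fun hiS => tp.eq_of_inter R hR S hS ⟨i, hi, hiS⟩, fun h => h ▸ hi⟩
  constructor
  · -- fully tagged
    intro P hP hPnone
    obtain ⟨i0, hi0⟩ := tp.classes_nonempty P hP
    have hx : (fun i => if i ∈ P then (1:ℝ) else 0) ∈ tp.polydiag := by
      refine ⟨fun R hR i hi j hj => ?_, fun R S hRS i hi j hj => ?_⟩
      · simp only [hmem R hR i hi P hP, hmem R hR j hj P hP]
      · have hRc := tp.star_dom R (by simp [hRS])
        have hSc := tp.star_ran R S hRS
        have hRne : R ≠ P := fun h => by rw [h, hPnone] at hRS; exact Option.some_ne_none _ hRS.symm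
        have hSne : S ≠ P := fun h => by
          have := tp.star_invol R S hRS
          rw [h, hPnone] at this; exact Option.some_ne_none _ this.symm
        simp only [hmem R hRc i hi P hP, hmem S hSc j hj P hP, if_neg hRne, if_neg hSne,
          neg_zero]
    have := hsum _ hx
    rw [← hcard P] at this
    have hpos : 0 < P.ncard := (Set.ncard_pos (Set.toFinite P)).mpr ⟨i0, hi0⟩
    exact absurd this (by positivity)
  · -- #P = #P*
    intro P Q hPQ
    by_cases hne : P = Q
    · rw [hne]
    have hPc := tp.star_dom P (by simp [hPQ])
    have hQc := tp.star_ran P Q hPQ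
    have hQP := tp.star_invol P Q hPQ
    set x : Fin n → ℝ := fun i => (if i ∈ P then (1:ℝ) else 0) - (if i ∈ Q then 1 else 0)
      with hxdef
    have hx : x ∈ tp.polydiag := by
      refine ⟨fun R hR i hi j hj => ?_, fun R S hRS i hi j hj => ?_⟩
      · simp only [hxdef, hmem R hR i hi P hPc, hmem R hR i hi Q hQc,
          hmem R hR j hj P hPc, hmem R hR j hj Q hQc]
      · have hRc := tp.star_dom R (by simp [hRS])
        have hSc := tp.star_ran R S hRS
        have hSR := tp.star_invol R S hRS
        simp only [hxdef, hmem R hRc i hi P hPc, hmem R hRc i hi Q hQc,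
          hmem S hSc j hj P hPc, hmem S hSc j hj Q hQc]
        by_cases hRP : R = P
        · have hSQ : S = Q := by
            rw [hRP] at hRS; rw [hRS] at hPQ; exact Option.some.inj hPQ
          have hSP : S ≠ P := fun h => hne (by rw [← hSQ, h])
          have hRQ : R ≠ Q := fun h => hne (by rw [← hRP, h])
          simp [hRP, hSQ, hSP, hRQ, hne, Ne.symm hne]
        · by_cases hRQ : R = Q
          · have hSP : S = P := by
              rw [hRQ] at hRS; rw [hRS] at hQP; exact Option.some.inj hQP
            have hSQ : S ≠ Q := fun h => hne (by rw [← hSP, h])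
            simp only [hRQ, hSP, if_neg hSQ, if_neg hRP, if_pos rfl]
            rw [if_neg (fun h : Q = P => hne h.symm), if_neg hne]
            norm_num
          · have hSP : S ≠ P := fun h => by
              rw [h] at hSR; rw [hSR] at hPQ; exact hRQ (Option.some.inj hPQ)
            have hSQ : S ≠ Q := fun h => by
              rw [h] at hSR; rw [hSR] at hQP; exact hRP (Option.some.inj hQP)
            simp [hRP, hRQ, hSP, hSQ]
    have hs := hsum _ hx
    have : (P.ncard : ℝ) = (Q.ncard : ℝ) := by
      rw [hcard P, hcard Q]
      have : ∑ i, x i = (∑ i, (if i ∈ P then (1:ℝ) else 0))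
          - ∑ i, (if i ∈ Q then (1:ℝ) else 0) := by
        rw [← Finset.sum_sub_distrib]
      rw [this] at hs
      linarith
    exact_mod_cast this
end

section
/- Let n ≥ 1, let G be a connected simple graph on the vertex set {1,…,n}, and let L be its Laplacian matrix, i.e., L_{ii} = deg(i), L_{ij} = −1 if {i,j} is an edge of G, and L_{ij} = 0 otherwise (i ≠ j). Then every L-invariant anti-synchrony subspace Δ_𝒫 ⊆ ℝ^n is evenly tagged. -/
section Aux

open Finset

/-- If `i` lies in class `R`, then `i ∈ P` iff `R = P`, for classes `P, R`. -/
lemma TaggedPartition.mem_class_iff {n : ℕ} (tp : TaggedPartition n)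
    {R P : Set (Fin n)} (hR : R ∈ tp.classes) (hP : P ∈ tp.classes)
    {i : Fin n} (hi : i ∈ R) : i ∈ P ↔ R = P := by
  constructor
  · intro h
    exact tp.eq_of_inter R hR P hP ⟨i, hi, h⟩
  · rintro rfl; exact hi

lemma sum_indicator_eq_ncard {n : ℕ} (R : Set (Fin n)) [DecidablePred (· ∈ R)] :
    ∑ i : Fin n, (if i ∈ R then (1 : ℝ) else 0) = R.ncard := by
  rw [Finset.sum_boole]
  norm_cast
  rw [Set.ncard_eq_toFinset_card']
  congr 1
  ext i
  simp

/-- The polydiagonal of a tagged partition, as a submodule of Euclidean space. -/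
def TaggedPartition.polydiagSubmodule {n : ℕ} (tp : TaggedPartition n) :
    Submodule ℝ (EuclideanSpace ℝ (Fin n)) where
  carrier := {x | WithLp.ofLp x ∈ tp.polydiag}
  add_mem' := by
    rintro x y ⟨hx1, hx2⟩ ⟨hy1, hy2⟩
    constructor
    · intro P hP i hi j hj
      show x i + y i = x j + y j
      rw [hx1 P hP i hi j hj, hy1 P hP i hi j hj]
    · intro P Q hPQ i hi j hj
      show x i + y i = -(x j + y j)
      rw [hx2 P Q hPQ i hi j hj, hy2 P Q hPQ i hi j hj]; ring
  zero_mem' := by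
    constructor
    · intro P hP i hi j hj; rfl
    · intro P Q hPQ i hi j hj
      show (0 : ℝ) = -0
      ring
  smul_mem' := by
    rintro c x ⟨hx1, hx2⟩
    constructor
    · intro P hP i hi j hj
      show c * x i = c * x j
      rw [hx1 P hP i hi j hj]
    · intro P Q hPQ i hi j hj
      show c * x i = -(c * x j)
      rw [hx2 P Q hPQ i hi j hj]; ring

/-- Key step: if the polydiagonal of `tp` is invariant under the Laplacian of a
connected graph and `tp` is not a synchrony partition, then every element of the
polydiagonal has coordinate sum zero. -/
lemma sum_eq_zero_of_polydiag {n : ℕ} (hn : 1 ≤ n)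
    (G : SimpleGraph (Fin n)) [DecidableRel G.Adj] (hconn : G.Connected)
    (tp : TaggedPartition n)
    (hinv : ∀ x ∈ tp.polydiag, (G.lapMatrix ℝ).mulVec x ∈ tp.polydiag)
    (hanti : ¬ tp.IsSynchrony) :
    ∀ x ∈ tp.polydiag, ∑ i, x i = 0 := by
  classical
  set L : Matrix (Fin n) (Fin n) ℝ := G.lapMatrix ℝ with hLdef
  set S : Submodule ℝ (EuclideanSpace ℝ (Fin n)) := tp.polydiagSubmodule with hSdef
  let ι : (Fin n → ℝ) → EuclideanSpace ℝ (Fin n) := (WithLp.equiv 2 (Fin n → ℝ)).symm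
  have hSmem : ∀ v : Fin n → ℝ, ι v ∈ S ↔ v ∈ tp.polydiag := fun _ => Iff.rfl
  have hLS : ∀ x : EuclideanSpace ℝ (Fin n), x ∈ S → ι (L.mulVec x) ∈ S :=
    fun x hx => hinv x hx
  have hsym : L.transpose = L := G.isSymm_lapMatrix ℝ
  have hsymm : ∀ a b : EuclideanSpace ℝ (Fin n),
      (inner ℝ (ι (L.mulVec a)) b : ℝ) = inner ℝ a (ι (L.mulVec b)) := by
    intro a b
    simp only [PiLp.inner_apply, RCLike.inner_apply, starRingEnd_apply, star_trivial]
    have h1 : ∑ i, ι (L.mulVec a) i * b i = dotProduct (L.mulVec a) b := rfl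
    have h2 : ∑ i, a i * ι (L.mulVec b) i = dotProduct a (L.mulVec b) := rfl
    rw [Finset.sum_congr rfl fun i _ => mul_comm (b i) (ι (L.mulVec a) i),
      Finset.sum_congr rfl fun i _ => mul_comm (ι (L.mulVec b) i) (a i), h1, h2, Matrix.dotProduct_mulVec, ← Matrix.mulVec_transpose, hsym]
  -- decompose the all-ones vector
  let one : EuclideanSpace ℝ (Fin n) := ι (fun _ => 1)
  obtain ⟨u, hu, w, hw, huw⟩ := S.exists_add_mem_mem_orthogonal one
  have honeker : L.mulVec (fun _ => (1 : ℝ)) = 0 := G.lapMatrix_mulVec_const_eq_zero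
  have hLw : ι (L.mulVec w) ∈ Sᗮ := by
    rw [Submodule.mem_orthogonal]
    intro s hs
    rw [← hsymm s w]
    exact Submodule.inner_right_of_mem_orthogonal (hLS s hs) hw
  have hpt : ∀ i, (1 : ℝ) = u i + w i := fun i => congrArg (fun v : EuclideanSpace ℝ (Fin n) => v i) huw
  have hadd : L.mulVec u + L.mulVec w = 0 := by
    rw [← Matrix.mulVec_add]
    have h : (u : Fin n → ℝ) + (w : Fin n → ℝ) = fun _ => (1 : ℝ) := funext fun i => (hpt i).symm
    rw [h]; exact honeker
  have hLu0 : L.mulVec u = 0 := by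
    have heq : ι (L.mulVec u) = -(ι (L.mulVec w)) := by
      ext k
      have h := congrFun hadd k
      show L.mulVec u k = -(L.mulVec w k)
      have h2 : L.mulVec u k + L.mulVec w k = 0 := h
      linarith
    have hmem2 : ι (L.mulVec u) ∈ Sᗮ := by rw [heq]; exact neg_mem hLw
    have h0 : (inner ℝ (ι (L.mulVec u)) (ι (L.mulVec u)) : ℝ) = 0 :=
      Submodule.inner_left_of_mem_orthogonal (hLS u hu) hmem2
    have hz := inner_self_eq_zero.mp h0
    funext k
    exact congrArg (fun v : EuclideanSpace ℝ (Fin n) => v k) hz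
  -- u is constant by connectivity
  have huconst : ∀ i j : Fin n, u i = u j := by
    have h := (G.lapMatrix_mulVec_eq_zero_iff_forall_reachable (x := (u : Fin n → ℝ))).mp
      hLu0
    intro i j
    exact h i j (hconn.preconnected i j)
  -- the anti-synchrony condition forces u = 0
  have hu0 : ∀ k, u k = 0 := by
    rw [TaggedPartition.IsSynchrony] at hanti
    push_neg at hanti
    obtain ⟨P, hPne⟩ := hanti
    obtain ⟨Q, hPQ⟩ := Option.ne_none_iff_exists'.mp hPne
    obtain ⟨i, hi⟩ := tp.classes_nonempty P (tp.star_dom P hPne)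
    obtain ⟨j, hj⟩ := tp.classes_nonempty Q (tp.star_ran P Q hPQ)
    have hupoly : (u : Fin n → ℝ) ∈ tp.polydiag := hu
    have h1 : u i = - u j := hupoly.2 P Q hPQ i hi j hj
    have h2 : u i = u j := huconst i j
    intro k
    have h3 : u k = u i := huconst k i
    linarith
  -- hence the all-ones vector is orthogonal to S
  have honeorth : one ∈ Sᗮ := by
    have h : one = w := by
      ext k
      show (1 : ℝ) = w k
      have := hpt k
      have := hu0 k
      linarith
    rw [h]; exact hw
  intro x hx
  have h : (inner ℝ (ι x) one : ℝ) = 0 :=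
    Submodule.inner_right_of_mem_orthogonal ((hSmem x).mpr hx) honeorth
  have h2 : ∑ i, x i = (inner ℝ (ι x) one : ℝ) := by
    simp only [PiLp.inner_apply, RCLike.inner_apply, starRingEnd_apply, star_trivial]
    refine Finset.sum_congr rfl fun i _ => ?_
    show x i = 1 * x i
    ring
  rw [h2, h]

end Aux

/-- Theorem 6.15, proving Conjecture 5.3 of [NSS6].
Let `L` be the Laplacian matrix of a connected simple graph on `n ≥ 1` vertices.
Then every `L`-invariant anti-synchrony subspace is evenly tagged. -/
theorem graphLaplacian_antiSynchrony_evenlyTagged {n : ℕ} (hn : 1 ≤ n)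
    (G : SimpleGraph (Fin n)) [DecidableRel G.Adj] (hconn : G.Connected)
    (L : Matrix (Fin n) (Fin n) ℝ)
    (hL : ∀ i j, L i j =
      if i = j then (G.degree i : ℝ) else if G.Adj i j then -1 else 0)
    (tp : TaggedPartition n)
    (hinv : ∀ x ∈ tp.polydiag, L.mulVec x ∈ tp.polydiag)
    (hanti : ¬ tp.IsSynchrony) :
    tp.EvenlyTagged := by
  classical
  have hLlap : L = G.lapMatrix ℝ := by
    ext i j
    rw [hL]
    by_cases h : i = j
    · subst h
      simp [SimpleGraph.lapMatrix, SimpleGraph.degMatrix, SimpleGraph.adjMatrix,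
        Matrix.sub_apply, Matrix.diagonal]
    · simp only [SimpleGraph.lapMatrix, SimpleGraph.degMatrix, SimpleGraph.adjMatrix,
        Matrix.sub_apply, Matrix.diagonal_apply_ne _ h, Matrix.of_apply, if_neg h]
      by_cases hadj : G.Adj i j <;> simp [hadj]
  have hinv' : ∀ x ∈ tp.polydiag, (G.lapMatrix ℝ).mulVec x ∈ tp.polydiag := by
    rw [← hLlap]; exact hinv
  have hsum := sum_eq_zero_of_polydiag hn G hconn tp hinv' hanti
  have hfull : tp.FullyTagged := by
    intro R hR hRnone
    let x : Fin n → ℝ := fun i => if i ∈ R then 1 else 0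
    have hx : x ∈ tp.polydiag := by
      constructor
      · intro P hP i hi j hj
        show (if i ∈ R then (1 : ℝ) else 0) = (if j ∈ R then 1 else 0)
        rw [if_congr (tp.mem_class_iff hP hR hi) rfl rfl,
            if_congr (tp.mem_class_iff hP hR hj) rfl rfl]
      · intro P Q hPQ i hi j hj
        have hPc := tp.star_dom P (by simp [hPQ])
        have hQc := tp.star_ran P Q hPQ
        have hPR : ¬ P = R := fun h => by rw [h, hRnone] at hPQ; simp at hPQ
        have hQR : ¬ Q = R := fun h => by
          have h2 := tp.star_invol P Q hPQ
          rw [h, hRnone] at h2; simp at h2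
        show (if i ∈ R then (1 : ℝ) else 0) = -(if j ∈ R then 1 else 0)
        rw [if_congr (tp.mem_class_iff hPc hR hi) rfl rfl, if_neg hPR,
            if_congr (tp.mem_class_iff hQc hR hj) rfl rfl, if_neg hQR]
        ring
    have h0 : ((R.ncard : ℝ)) = 0 := by
      rw [← sum_indicator_eq_ncard R]
      exact hsum x hx
    have hpos : 0 < R.ncard :=
      (Set.ncard_pos (Set.toFinite R)).mpr (tp.classes_nonempty R hR)
    rw [Nat.cast_eq_zero] at h0
    omega
  refine ⟨hfull, ?_⟩
  intro P Q hPQ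
  by_cases hPQeq : P = Q
  · subst hPQeq; rfl
  · have hPc := tp.star_dom P (by simp [hPQ])
    have hQc := tp.star_ran P Q hPQ
    let x : Fin n → ℝ := fun i => (if i ∈ P then 1 else 0) - (if i ∈ Q then 1 else 0)
    have hx : x ∈ tp.polydiag := by
      constructor
      · intro A hA i hi j hj
        show (if i ∈ P then (1 : ℝ) else 0) - (if i ∈ Q then 1 else 0)
            = (if j ∈ P then 1 else 0) - (if j ∈ Q then 1 else 0)
        rw [if_congr (tp.mem_class_iff hA hPc hi) rfl rfl,
            if_congr (tp.mem_class_iff hA hQc hi) rfl rfl,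
            if_congr (tp.mem_class_iff hA hPc hj) rfl rfl,
            if_congr (tp.mem_class_iff hA hQc hj) rfl rfl]
      · intro A B hAB i hi j hj
        have hAc := tp.star_dom A (by simp [hAB])
        have hBc := tp.star_ran A B hAB
        show (if i ∈ P then (1 : ℝ) else 0) - (if i ∈ Q then 1 else 0)
            = -((if j ∈ P then 1 else 0) - (if j ∈ Q then 1 else 0))
        rw [if_congr (tp.mem_class_iff hAc hPc hi) rfl rfl,
            if_congr (tp.mem_class_iff hAc hQc hi) rfl rfl,
            if_congr (tp.mem_class_iff hBc hPc hj) rfl rfl,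
            if_congr (tp.mem_class_iff hBc hQc hj) rfl rfl]
        by_cases hAP : A = P
        · have hBQ : B = Q := by
            rw [hAP] at hAB
            exact Option.some.inj (hAB.symm.trans hPQ)
          simp [hAP, hBQ, hPQeq, Ne.symm hPQeq]
        · by_cases hAQ : A = Q
          · have hBP : B = P := by
              have h1 := tp.star_invol P Q hPQ
              rw [hAQ] at hAB
              exact Option.some.inj (hAB.symm.trans h1)
            simp [hAQ, hBP, hPQeq, Ne.symm hPQeq]
          · have hBP : ¬ B = P := by
              intro h
              have h1 := tp.star_invol A B hAB
              rw [h] at h1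
              exact hAQ (Option.some.inj (h1.symm.trans hPQ))
            have hBQ : ¬ B = Q := by
              intro h
              have h1 := tp.star_invol A B hAB
              have h2 := tp.star_invol P Q hPQ
              rw [h] at h1
              exact hAP (Option.some.inj (h1.symm.trans h2))
            simp [hAP, hAQ, hBP, hBQ]
    have h0 : (P.ncard : ℝ) - Q.ncard = 0 := by
      rw [← sum_indicator_eq_ncard P, ← sum_indicator_eq_ncard Q, ← Finset.sum_sub_distrib]
      exact hsum x hx
    have : (P.ncard : ℝ) = Q.ncard := by linarith
    exact_mod_cast this
end
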